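/- Let m ≥ 1, let O ⊆ ℝ^m be a nonempty open convex set, let f : O → ℝ be convex, let x̄ ∈ O, and suppose (f_t)_{t∈T} is a lower-C² representation of f on an open neighbourhood V of x̄ with V ⊆ O. Let A(x̄) = argmax_{t∈T} f_t(x̄). Then ∂f(x̄) equals the convex hull of {∇f_t(x̄) : t ∈ A(x̄)}. -/

import Mathlib

open scoped RealInnerProductSpace

/-- The subdifferential of `f : O → ℝ` at `x`:
`∂f(x) = {v : f(y) ≥ f(x) + ⟪v, y - x⟫ for all y ∈ O}`. -/
def subdiff {m : ℕ} (O : Set (EuclideanSpace ℝ (Fin m)))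
    (f : EuclideanSpace ℝ (Fin m) → ℝ) (x : EuclideanSpace ℝ (Fin m)) :
    Set (EuclideanSpace ℝ (Fin m)) :=
  {v | ∀ y ∈ O, f x + ⟪v, y - x⟫ ≤ f y}

/-- `(ft t)_{t ∈ T}` is a lower-C² representation of `f` on the set `V`: each `ft t`
is C² on `V`, the values, gradients and Hessians depend continuously on
`(t, x) ∈ T × V`, and `f = max_{t ∈ T} ft t` on `V` (the maximum being attained). -/
def IsLowerC2Rep {m : ℕ} (T : Type) [TopologicalSpace T]
    (f : EuclideanSpace ℝ (Fin m) → ℝ)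
    (ft : T → EuclideanSpace ℝ (Fin m) → ℝ)
    (V : Set (EuclideanSpace ℝ (Fin m))) : Prop :=
  (∀ t : T, ContDiffOn ℝ 2 (ft t) V) ∧
  ContinuousOn (fun p : T × EuclideanSpace ℝ (Fin m) => ft p.1 p.2)
    (Set.univ ×ˢ V) ∧
  ContinuousOn (fun p : T × EuclideanSpace ℝ (Fin m) => gradient (ft p.1) p.2)
    (Set.univ ×ˢ V) ∧
  ContinuousOn
    (fun p : T × EuclideanSpace ℝ (Fin m) => fderiv ℝ (gradient (ft p.1)) p.2)
    (Set.univ ×ˢ V) ∧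
  (∀ x ∈ V, (∀ t : T, ft t x ≤ f x) ∧ (∃ t : T, ft t x = f x))

open Set Filter Topology


lemma sum_extend_aux {β : Type*} [AddCommMonoid β] {k n : ℕ} (h : k ≤ n) (F : Fin k → β) :
    ∑ j : Fin n, (if hj : (j : ℕ) < k then F ⟨j, hj⟩ else 0) = ∑ i : Fin k, F i := by
  classical
  let emb : Fin k ↪ Fin n := ⟨Fin.castLE h, Fin.castLE_injective h⟩
  rw [← Finset.sum_subset (Finset.subset_univ ((Finset.univ : Finset (Fin k)).map emb))]
  · rw [Finset.sum_map]
    apply Finset.sum_congr rfl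
    intro i _
    have hi : ((emb i : Fin n) : ℕ) < k := i.isLt
    rw [dif_pos hi]
    exact congrArg F (Fin.ext rfl)
  · intro j _ hj
    rw [dif_neg]
    intro hc
    exact hj (Finset.mem_map.2 ⟨⟨(j : ℕ), hc⟩, Finset.mem_univ _, Fin.ext rfl⟩)

lemma decay_aux {φ dφ : ℝ → ℝ} {u s : ℝ} (hs : 0 ≤ s)
    (hd : ∀ σ ∈ Set.Icc 0 s, HasDerivAt φ (dφ σ) σ)
    (hu : ∀ σ ∈ Set.Icc 0 s, dφ σ ≤ u) :
    φ s ≤ φ 0 + s * u := by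
  have hder : ∀ σ ∈ Set.Icc 0 s, HasDerivAt (fun σ => φ σ - σ * u) (dφ σ - u) σ := by
    intro σ hσ
    exact ((hd σ hσ).sub ((hasDerivAt_id σ).mul_const u)).congr_deriv (by simp)
  have H : AntitoneOn (fun σ => φ σ - σ * u) (Set.Icc 0 s) := by
    apply antitoneOn_of_deriv_nonpos (convex_Icc 0 s)
    · intro σ hσ
      exact ((hder σ hσ).continuousAt).continuousWithinAt
    · intro σ hσ
      rw [interior_Icc] at hσ
      exact ((hder σ (Set.Ioo_subset_Icc_self hσ)).differentiableAt).differentiableWithinAt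
    · intro σ hσ
      rw [interior_Icc] at hσ
      have hσ' := Set.Ioo_subset_Icc_self hσ
      rw [(hder σ hσ').deriv]
      have := hu σ hσ'
      linarith
  have := H (Set.left_mem_Icc.2 hs) (Set.right_mem_Icc.2 hs) hs
  simp only at this
  linarith

set_option maxHeartbeats 1000000 in
lemma isCompact_convexHull_euclidean {m : ℕ} {S : Set (EuclideanSpace ℝ (Fin m))}
    (hS : IsCompact S) : IsCompact (convexHull ℝ S) := by
  classical
  set n := m + 1 with hn
  let Φ : (Fin n → ℝ) × (Fin n → EuclideanSpace ℝ (Fin m)) → EuclideanSpace ℝ (Fin m) :=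
    fun p => ∑ i, p.1 i • p.2 i
  have hΦ : Continuous Φ :=
    continuous_finset_sum _ fun i _ =>
      ((continuous_apply i).comp continuous_fst).smul ((continuous_apply i).comp continuous_snd)
  have hD : IsCompact ((stdSimplex ℝ (Fin n)) ×ˢ (Set.pi Set.univ fun _ : Fin n => S)) :=
    IsCompact.prod (isCompact_stdSimplex _ _) (isCompact_univ_pi fun _ => hS)
  have himg : convexHull ℝ S
      = Φ '' ((stdSimplex ℝ (Fin n)) ×ˢ (Set.pi Set.univ fun _ : Fin n => S)) := by
    apply Set.Subset.antisymm
    · intro x hx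
      rw [convexHull_eq_union] at hx
      simp only [Set.mem_iUnion] at hx
      obtain ⟨t, hts, hai, hxt⟩ := hx
      have htne : t.Nonempty := by
        rcases t.eq_empty_or_nonempty with rfl | h
        · simp at hxt
        · exact h
      rw [Finset.convexHull_eq] at hxt
      obtain ⟨w, hw0, hw1, hxw⟩ := hxt
      rw [Finset.centerMass_eq_of_sum_1 _ _ hw1] at hxw
      simp only [id] at hxw
      have hcard : Fintype.card ↥t ≤ n := by
        have h1 := hai.card_le_finrank_succ
        have h2 : Module.finrank ℝ (vectorSpan ℝ
            (Set.range ((↑) : ↥t → EuclideanSpace ℝ (Fin m)))) ≤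
            Module.finrank ℝ (EuclideanSpace ℝ (Fin m)) := Submodule.finrank_le _
        have h3 : Module.finrank ℝ (EuclideanSpace ℝ (Fin m)) = m := finrank_euclideanSpace_fin
        omega
      set k := Fintype.card ↥t with hk
      let e : ↥t ≃ Fin k := Fintype.equivFin ↥t
      obtain ⟨y0, hy0⟩ := htne
      let ω : Fin n → ℝ := fun j => if hj : (j : ℕ) < k then w (e.symm ⟨j, hj⟩) else 0
      let z : Fin n → EuclideanSpace ℝ (Fin m) :=
        fun j => if hj : (j : ℕ) < k then (e.symm ⟨j, hj⟩ : EuclideanSpace ℝ (Fin m)) else y0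
      have hsumω : ∑ j : Fin n, ω j = 1 := by
        calc ∑ j : Fin n, ω j = ∑ i : Fin k, w (e.symm i) :=
              sum_extend_aux hcard (fun i => w (e.symm i))
          _ = ∑ y : ↥t, w y := Equiv.sum_comp e.symm (fun y : ↥t => w y)
          _ = ∑ y ∈ t, w y := Finset.sum_coe_sort t w
          _ = 1 := hw1
      refine ⟨(ω, z), ⟨⟨fun j => ?_, hsumω⟩, fun j _ => ?_⟩, ?_⟩
      · dsimp only [ω]
        split_ifs with hj
        · exact hw0 _ (Finset.coe_mem _)
        · exact le_rfl
      · dsimp only [z]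
        split_ifs with hj
        · exact hts (Finset.coe_mem _)
        · exact hts hy0
      · show ∑ j : Fin n, ω j • z j = x
        have hωz : ∀ j : Fin n, ω j • z j = (if hj : (j : ℕ) < k then
            (fun i : Fin k => w (e.symm i) • (e.symm i : EuclideanSpace ℝ (Fin m))) ⟨j, hj⟩
            else 0) := by
          intro j
          by_cases hj : (j : ℕ) < k
          · dsimp only [ω, z]
            rw [dif_pos hj, dif_pos hj, dif_pos hj]
          · dsimp only [ω, z]
            rw [dif_neg hj, dif_neg hj, dif_neg hj, zero_smul]
        calc ∑ j : Fin n, ω j • z j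
            = ∑ j : Fin n, (if hj : (j : ℕ) < k then
                (fun i : Fin k => w (e.symm i) • (e.symm i : EuclideanSpace ℝ (Fin m))) ⟨j, hj⟩
                else 0) := Finset.sum_congr rfl (fun j _ => hωz j)
          _ = ∑ i : Fin k, w (e.symm i) • (e.symm i : EuclideanSpace ℝ (Fin m)) :=
              sum_extend_aux hcard
                (fun i : Fin k => w (e.symm i) • (e.symm i : EuclideanSpace ℝ (Fin m)))
          _ = ∑ y : ↥t, w y • (y : EuclideanSpace ℝ (Fin m)) :=
              Equiv.sum_comp e.symm (fun y : ↥t => w y • (y : EuclideanSpace ℝ (Fin m)))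
          _ = ∑ y ∈ t, w y • y := Finset.sum_coe_sort t (fun y => w y • y)
          _ = x := hxw
    · intro x hx
      obtain ⟨p, hp, rfl⟩ := hx
      obtain ⟨hp1, hp2⟩ := hp
      exact (convex_convexHull ℝ S).sum_mem (fun i _ => hp1.1 i) hp1.2
        (fun i _ => subset_convexHull ℝ S (hp2 i trivial))
  rw [himg]
  exact hD.image hΦ

set_option maxHeartbeats 1000000 in
theorem subdifferential_of_lowerC2 {m : ℕ} (hm : 1 ≤ m)
    (O : Set (EuclideanSpace ℝ (Fin m))) (hOne : O.Nonempty) (hOopen : IsOpen O)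
    (hOconv : Convex ℝ O)
    (f : EuclideanSpace ℝ (Fin m) → ℝ) (hf : ConvexOn ℝ O f)
    (xbar : EuclideanSpace ℝ (Fin m)) (hxbar : xbar ∈ O)
    (V : Set (EuclideanSpace ℝ (Fin m))) (hVopen : IsOpen V) (hxV : xbar ∈ V)
    (hVO : V ⊆ O)
    (T : Type) [TopologicalSpace T] [CompactSpace T]
    (ft : T → EuclideanSpace ℝ (Fin m) → ℝ)
    (hrep : IsLowerC2Rep T f ft V) :
    subdiff O f xbar =
      convexHull ℝ
        ((fun t => gradient (ft t) xbar) '' {t : T | ft t xbar = f xbar}) := by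
  classical
  obtain ⟨hC2, hcont, hgradcont, -, hmax⟩ := hrep
  obtain ⟨hfle, t₀, ht₀⟩ := hmax xbar hxV
  set S : Set (EuclideanSpace ℝ (Fin m)) :=
    (fun t => gradient (ft t) xbar) '' {t : T | ft t xbar = f xbar} with hSdef
  have hopenTV : IsOpen ((Set.univ : Set T) ×ˢ V) := isOpen_univ.prod hVopen
  have hvalcont : Continuous fun t : T => ft t xbar := by
    rw [continuous_iff_continuousAt]
    intro t
    exact (hcont.continuousAt (hopenTV.mem_nhds ⟨trivial, hxV⟩)).comp
      (Continuous.continuousAt (continuous_id.prodMk continuous_const))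
  have hgcont : Continuous fun t : T => gradient (ft t) xbar := by
    rw [continuous_iff_continuousAt]
    intro t
    exact (hgradcont.continuousAt (hopenTV.mem_nhds ⟨trivial, hxV⟩)).comp
      (Continuous.continuousAt (continuous_id.prodMk continuous_const))
  have hAclosed : IsClosed {t : T | ft t xbar = f xbar} :=
    isClosed_eq hvalcont continuous_const
  have hScompact : IsCompact S := (hAclosed.isCompact).image hgcont
  obtain ⟨r0, hr0pos, hball⟩ := Metric.isOpen_iff.mp hVopen xbar hxV
  have hline : ∀ (t' : T) (d : EuclideanSpace ℝ (Fin m)) (σ : ℝ), xbar + σ • d ∈ V →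
      HasDerivAt (fun σ : ℝ => ft t' (xbar + σ • d))
        ⟪gradient (ft t') (xbar + σ • d), d⟫ σ := by
    intro t' d σ hy
    have hdiff : DifferentiableAt ℝ (ft t') (xbar + σ • d) :=
      ((hC2 t').differentiableOn (by norm_num)).differentiableAt (hVopen.mem_nhds hy)
    have hF : HasFDerivAt (ft t')
        ((InnerProductSpace.toDual ℝ _) (gradient (ft t') (xbar + σ • d))) (xbar + σ • d) :=
      hasGradientAt_iff_hasFDerivAt.mp hdiff.hasGradientAt
    have hl : HasDerivAt (fun σ : ℝ => xbar + σ • d) d σ := by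
      simpa using ((hasDerivAt_id σ).smul_const d).const_add xbar
    exact (hF.comp_hasDerivAt σ hl).congr_deriv InnerProductSpace.toDual_apply_apply
  ext v
  constructor
  · -- subdiff ⊆ convexHull
    intro hv
    by_contra hvC
    have hCcl : IsClosed (convexHull ℝ S) :=
      (isCompact_convexHull_euclidean hScompact).isClosed
    obtain ⟨ℓ, u, hlt, hvu⟩ :=
      geometric_hahn_banach_closed_point (convex_convexHull ℝ S) hCcl hvC
    set d := (InnerProductSpace.toDual ℝ (EuclideanSpace ℝ (Fin m))).symm ℓ with hddef
    have hdapp : ∀ y, ⟪d, y⟫ = ℓ y := fun y => InnerProductSpace.toDual_symm_apply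
    have hactive : ∀ t : T, ft t xbar = f xbar → ⟪gradient (ft t) xbar, d⟫ < u := by
      intro t ht
      have h1 : gradient (ft t) xbar ∈ convexHull ℝ S :=
        subset_convexHull ℝ S ⟨t, ht, rfl⟩
      rw [real_inner_comm, hdapp]
      exact hlt _ h1
    have key : ∀ t : T, ∃ N ∈ 𝓝 t, ∃ δ : ℝ, 0 < δ ∧ ∀ t' ∈ N, ∀ s : ℝ, 0 < s → s < δ →
        ft t' (xbar + s • d) ≤ f xbar + s * u := by
      intro t
      by_cases hG : ⟪gradient (ft t) xbar, d⟫ < u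
      · have hGat : ContinuousAt (fun p : T × EuclideanSpace ℝ (Fin m) =>
            ⟪gradient (ft p.1) p.2, d⟫) (t, xbar) :=
          (hgradcont.continuousAt (hopenTV.mem_nhds ⟨trivial, hxV⟩)).inner continuousAt_const
        have hmemnh : {p : T × EuclideanSpace ℝ (Fin m) | ⟪gradient (ft p.1) p.2, d⟫ < u}
            ∈ 𝓝 (t, xbar) := hGat.preimage_mem_nhds (isOpen_Iio.mem_nhds hG)
        rw [mem_nhds_prod_iff] at hmemnh
        obtain ⟨N, hN, U, hU, hNU⟩ := hmemnh
        obtain ⟨r, hrpos, hrU⟩ := Metric.mem_nhds_iff.mp hU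
        refine ⟨N, hN, min r r0 / (‖d‖ + 1), by positivity, ?_⟩
        intro t' hNt' s hs hsδ
        have hsd : s * (‖d‖ + 1) < min r r0 := (lt_div_iff₀ (by positivity)).mp hsδ
        have hseg : ∀ σ : ℝ, σ ∈ Set.Icc 0 s →
            xbar + σ • d ∈ Metric.ball xbar (min r r0) := by
          intro σ hσ
          rw [Metric.mem_ball, dist_eq_norm, add_sub_cancel_left, norm_smul,
            Real.norm_eq_abs, abs_of_nonneg hσ.1]
          nlinarith [norm_nonneg d, hσ.2, hσ.1]
        have hsegV : ∀ σ : ℝ, σ ∈ Set.Icc 0 s → xbar + σ • d ∈ V := fun σ hσ =>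
          hball (Metric.ball_subset_ball (min_le_right r r0) (hseg σ hσ))
        have hsegU : ∀ σ : ℝ, σ ∈ Set.Icc 0 s → xbar + σ • d ∈ U := fun σ hσ =>
          hrU (Metric.ball_subset_ball (min_le_left r r0) (hseg σ hσ))
        have hdφ : ∀ σ ∈ Set.Icc 0 s, HasDerivAt (fun σ : ℝ => ft t' (xbar + σ • d))
            ((fun σ : ℝ => ⟪gradient (ft t') (xbar + σ • d), d⟫) σ) σ :=
          fun σ hσ => hline t' d σ (hsegV σ hσ)
        have hdu : ∀ σ ∈ Set.Icc 0 s,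
            (fun σ : ℝ => ⟪gradient (ft t') (xbar + σ • d), d⟫) σ ≤ u := by
          intro σ hσ
          have hmemNU : (t', xbar + σ • d) ∈ N ×ˢ U := ⟨hNt', hsegU σ hσ⟩
          exact le_of_lt (hNU hmemNU)
        have hdecay := decay_aux (le_of_lt hs) hdφ hdu
        simp only [zero_smul, add_zero] at hdecay
        exact hdecay.trans (by linarith [hfle t'])
      · have htne : ft t xbar ≠ f xbar := fun h => hG (hactive t h)
        have hgap : ft t xbar < f xbar := lt_of_le_of_ne (hfle t) htne
        set c := f xbar - ft t xbar with hcdef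
        have hcpos : 0 < c := by simp only [hcdef]; linarith
        have hvat : ContinuousAt (fun p : T × EuclideanSpace ℝ (Fin m) => ft p.1 p.2)
            (t, xbar) := hcont.continuousAt (hopenTV.mem_nhds ⟨trivial, hxV⟩)
        have hmemnh : {p : T × EuclideanSpace ℝ (Fin m) | ft p.1 p.2 < f xbar - c / 2}
            ∈ 𝓝 (t, xbar) :=
          hvat.preimage_mem_nhds (isOpen_Iio.mem_nhds
            (show ft t xbar < f xbar - c / 2 by linarith))
        rw [mem_nhds_prod_iff] at hmemnh
        obtain ⟨N, hN, U, hU, hNU⟩ := hmemnh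
        obtain ⟨r, hrpos, hrU⟩ := Metric.mem_nhds_iff.mp hU
        refine ⟨N, hN, min (r / (‖d‖ + 1)) ((c / 2) / (|u| + 1)), by positivity, ?_⟩
        intro t' hNt' s hs hsδ
        have hs1 : s * (‖d‖ + 1) < r :=
          (lt_div_iff₀ (by positivity)).mp (hsδ.trans_le (min_le_left _ _))
        have hs2 : s * (|u| + 1) < c / 2 :=
          (lt_div_iff₀ (by positivity)).mp (hsδ.trans_le (min_le_right _ _))
        have hmem : xbar + s • d ∈ Metric.ball xbar r := by
          rw [Metric.mem_ball, dist_eq_norm, add_sub_cancel_left, norm_smul,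
            Real.norm_eq_abs, abs_of_nonneg (le_of_lt hs)]
          nlinarith [norm_nonneg d]
        have hmemNU : (t', xbar + s • d) ∈ N ×ˢ U := ⟨hNt', hrU hmem⟩
        have hlt' : ft t' (xbar + s • d) < f xbar - c / 2 := hNU hmemNU
        have hsu : -(c / 2) ≤ s * u := by nlinarith [neg_abs_le u, abs_nonneg u]
        linarith
    choose N hN δ hδpos hP using key
    obtain ⟨F, hF⟩ := IsCompact.elim_nhds_subcover isCompact_univ N (fun t _ => hN t)
    have hFne : F.Nonempty := by
      rcases F.eq_empty_or_nonempty with rfl | h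
      · exfalso
        have := hF.2 (Set.mem_univ t₀)
        simpa using this
      · exact h
    set δ₀ : ℝ := min (F.inf' hFne δ) (r0 / (‖d‖ + 1)) with hδ₀def
    have hδ₀pos : 0 < δ₀ :=
      lt_min ((Finset.lt_inf'_iff hFne).2 fun i _ => hδpos i) (by positivity)
    set s : ℝ := δ₀ / 2 with hsdef
    have hspos : 0 < s := by positivity
    have hsr0 : s * (‖d‖ + 1) < r0 := by
      have h1 : s < r0 / (‖d‖ + 1) := by
        have : s < δ₀ := by simp only [hsdef]; linarith
        exact this.trans_le (min_le_right _ _)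
      exact (lt_div_iff₀ (by positivity)).mp h1
    have hsV : xbar + s • d ∈ V := by
      apply hball
      rw [Metric.mem_ball, dist_eq_norm, add_sub_cancel_left, norm_smul,
        Real.norm_eq_abs, abs_of_nonneg (le_of_lt hspos)]
      nlinarith [norm_nonneg d]
    obtain ⟨-, tm, htm⟩ := hmax _ hsV
    have hbound : f (xbar + s • d) ≤ f xbar + s * u := by
      rw [← htm]
      have h1 := hF.2 (Set.mem_univ tm)
      simp only [Set.mem_iUnion] at h1
      obtain ⟨i, hiF, hi⟩ := h1
      apply hP i tm hi s hspos
      calc s < δ₀ := by simp only [hsdef]; linarith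
        _ ≤ F.inf' hFne δ := min_le_left _ _
        _ ≤ δ i := Finset.inf'_le _ hiF
    have hsub := hv _ (hVO hsV)
    rw [add_sub_cancel_left, real_inner_smul_right] at hsub
    have hvd : ⟪v, d⟫ ≤ u := by nlinarith
    have hℓv : ℓ v = ⟪v, d⟫ := by rw [← hdapp v, real_inner_comm]
    linarith [hvu, hℓv ▸ hvd]
  · -- convexHull ⊆ subdiff
    intro hv
    have hSsub : S ⊆ subdiff O f xbar := by
      rintro g ⟨t, ht, rfl⟩
      intro y hy
      set wv : EuclideanSpace ℝ (Fin m) := y - xbar with hwv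
      have hD0 := hline t wv 0 (by simpa using hxV)
      simp only [zero_smul, add_zero] at hD0
      have hT := hasDerivAt_iff_tendsto_slope.mp hD0
      have hT' : Tendsto (slope (fun s : ℝ => ft t (xbar + s • wv)) 0) (𝓝[>] (0:ℝ))
          (𝓝 ⟪gradient (ft t) xbar, wv⟫) :=
        hT.mono_left (nhdsWithin_mono 0 fun s hs => Set.mem_compl_singleton_iff.mpr (ne_of_gt hs))
      set s1 : ℝ := min 1 (r0 / (‖wv‖ + 1)) with hs1def
      have hs1pos : 0 < s1 := lt_min one_pos (by positivity)
      have hbound : ∀ᶠ s in 𝓝[>] (0:ℝ),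
          slope (fun s : ℝ => ft t (xbar + s • wv)) 0 s ≤ f y - f xbar := by
        filter_upwards [Ioo_mem_nhdsGT_of_mem
          (show (0:ℝ) ∈ Set.Ico 0 s1 from ⟨le_refl _, hs1pos⟩)] with s hsIoo
        obtain ⟨hs0, hss1⟩ := hsIoo
        have hsle1 : s ≤ 1 := le_of_lt (hss1.trans_le (min_le_left _ _))
        have hsr0 : s * (‖wv‖ + 1) < r0 := by
          have : s < r0 / (‖wv‖ + 1) := hss1.trans_le (min_le_right _ _)
          exact (lt_div_iff₀ (by positivity)).mp this
        have hsV' : xbar + s • wv ∈ V := by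
          apply hball
          rw [Metric.mem_ball, dist_eq_norm, add_sub_cancel_left, norm_smul,
            Real.norm_eq_abs, abs_of_nonneg (le_of_lt hs0)]
          nlinarith [norm_nonneg wv]
        have hφs : ft t (xbar + s • wv) ≤ f (xbar + s • wv) := (hmax _ hsV').1 t
        have hpt : (1 - s) • xbar + s • y = xbar + s • wv := by
          simp only [hwv, smul_sub, sub_smul, one_smul]
          abel
        have hcvx : f (xbar + s • wv) ≤ (1 - s) * f xbar + s * f y := by
          rw [← hpt]
          exact hf.2 hxbar hy (by linarith) (le_of_lt hs0) (by ring)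
        rw [slope_def_field, sub_zero, div_le_iff₀ hs0]
        have hφ0 : ft t (xbar + (0:ℝ) • wv) = f xbar := by
          rw [zero_smul, add_zero, ht]
        simp only [hφ0]
        nlinarith
      have hfinal : ⟪gradient (ft t) xbar, wv⟫ ≤ f y - f xbar := le_of_tendsto hT' hbound
      show f xbar + ⟪gradient (ft t) xbar, wv⟫ ≤ f y
      linarith
    exact convexHull_min hSsub (by
      intro a ha b hb wa wb hwa hwb hw
      intro y hy
      have h1 := ha y hy
      have h2 := hb y hy
      have hinner : ⟪wa • a + wb • b, y - xbar⟫
          = wa * ⟪a, y - xbar⟫ + wb * ⟪b, y - xbar⟫ := by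
        rw [inner_add_left, real_inner_smul_left, real_inner_smul_left]
      rw [hinner]
      have e1 : (wa + wb) * f xbar = f xbar := by rw [hw, one_mul]
      have e2 : (wa + wb) * f y = f y := by rw [hw, one_mul]
      linarith [mul_le_mul_of_nonneg_left h1 hwa, mul_le_mul_of_nonneg_left h2 hwb, e1, e2]) hv
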